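/- If χ is a Gaussian pushforward on a finite abelian group G, then for all g₁, g₂ ∈ G: χ(g₁)·χ(g₂)/χ(0) ≤ (χ(g₁ + g₂) + χ(g₁ − g₂))/2. (Note χ(0) ≥ ρ(0) = 1 > 0, so the quotient is well defined.) -/

import Mathlib

open scoped RealInnerProductSpace

/-- A function `χ : G → ℝ` on a finite abelian group is a *Gaussian pushforward* if
there is a lattice `L` (a discrete additive subgroup of a finite-dimensional real inner
product space) and a group homomorphism `h : L →+ G` such that for every `g`,
`χ g` is the (absolutely convergent) sum of `ρ x = exp (−π ⟨x, x⟩)` over `h ⁻¹ g`. -/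
def IsGaussianPushforward {G : Type} [AddCommGroup G] (χ : G → ℝ) : Prop :=
  ∃ (V : Type) (iN : NormedAddCommGroup V),
    letI := iN
    ∃ (iI : InnerProductSpace ℝ V),
      letI := iI
      FiniteDimensional ℝ V ∧
      ∃ (L : AddSubgroup V) (h : L →+ G),
        DiscreteTopology L ∧
        ∀ g : G, HasSum (fun x : {x : L // h x = g} =>
          Real.exp (-Real.pi * ⟪((x : L) : V), ((x : L) : V)⟫)) (χ g)

open scoped ENNReal

set_option linter.unusedSectionVars false

namespace GaussPFAux

open ENNReal

/-- AM-GM in `ℝ≥0∞`, ordered case. -/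
lemma amgm_aux {x y : ℝ≥0∞} (hxy : x ≤ y) : 2 * (x * y) ≤ x * x + y * y := by
  obtain ⟨z, rfl⟩ := exists_add_of_le hxy
  have : x * x + (x + z) * (x + z) = 2 * (x * (x + z)) + z * z := by ring
  rw [this]
  exact le_self_add

/-- AM-GM in `ℝ≥0∞`. -/
lemma amgm (x y : ℝ≥0∞) : 2 * (x * y) ≤ x * x + y * y := by
  rcases le_total x y with hh | hh
  · exact amgm_aux hh
  · have := amgm_aux hh
    rw [mul_comm y x] at this
    rw [add_comm (x*x)]
    exact this

/-- Product of tsums in `ℝ≥0∞`. -/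
lemma tsum_prod_mul {α β : Type*} (f : α → ℝ≥0∞) (g : β → ℝ≥0∞) :
    ∑' p : α × β, f p.1 * g p.2 = (∑' a, f a) * ∑' b, g b := by
  calc ∑' p : α × β, f p.1 * g p.2 = ∑' a, ∑' b, f a * g b := ENNReal.tsum_prod'
    _ = ∑' a, f a * ∑' b, g b := by simp_rw [ENNReal.tsum_mul_left]
    _ = (∑' a, f a) * ∑' b, g b := ENNReal.tsum_mul_right

variable {G : Type} [AddCommGroup G]
variable {V : Type} [NormedAddCommGroup V] [InnerProductSpace ℝ V]

lemma half_cancel {u w : V} (H : u + u = w + w) : u = w := by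
  have h2 : (2 : ℝ) • u = (2 : ℝ) • w := by
    rw [two_smul, two_smul]; exact H
  exact smul_right_injective V two_ne_zero h2

variable (L : AddSubgroup V) (h : L →+ G)

/-- The doubling homomorphism on `L`. -/
def dbl : L →+ L := AddMonoidHom.mk' (fun x => x + x) (fun a b => by abel)

@[simp] lemma dbl_apply (x : L) : dbl L x = x + x := rfl

/-- The subgroup `2 · ker h` of `L`. -/
def J : AddSubgroup L := (h.ker).map (dbl L)

/-- Projection to the quotient `L ⧸ 2·ker h`. -/
def pr : L →+ L ⧸ J L h := QuotientAddGroup.mk' _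

noncomputable def FE (v : V) : ℝ≥0∞ := ENNReal.ofReal (Real.exp (-Real.pi * ⟪v, v⟫))

noncomputable def TE (v : V) : ℝ≥0∞ := ENNReal.ofReal (Real.exp (-(Real.pi * ⟪v, v⟫) / 2))

lemma FE_mul (x y : V) : FE x * FE y = TE (x + y) * TE (x - y) := by
  unfold FE TE
  rw [← ENNReal.ofReal_mul (Real.exp_nonneg _), ← ENNReal.ofReal_mul (Real.exp_nonneg _),
    ← Real.exp_add, ← Real.exp_add]
  congr 1
  rw [Real.exp_eq_exp]
  have h1 := real_inner_add_add_self x y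
  have h2 := real_inner_sub_sub_self x y
  linear_combination (Real.pi / 2) * h1 + (Real.pi / 2) * h2

noncomputable def chiE (g : G) : ℝ≥0∞ := ∑' x : {x : L // h x = g}, FE ((x : L) : V)

noncomputable def theta (g : G) (c : L ⧸ J L h) : ℝ≥0∞ :=
  ∑' u : {u : L // h u = g ∧ pr L h u = c}, TE ((u : L) : V)

lemma claim1 (g₁ g₂ : G) (w₀ : L) (hw : h w₀ = g₂) :
    chiE L h g₁ * chiE L h g₂ =
      ∑' c : L ⧸ J L h,
        theta L h (g₁ + g₂) c * theta L h (g₁ - g₂) (c - pr L h (w₀ + w₀)) := by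
  classical
  set a := g₁ + g₂ with ha
  set b := g₁ - g₂ with hb
  set d := pr L h (w₀ + w₀) with hd
  -- The target index type
  let Tset := {p : L × L // h p.1 = a ∧ h p.2 = b ∧ pr L h p.1 = pr L h p.2 + d}
  let Φ : {x : L // h x = g₁} × {y : L // h y = g₂} → Tset := fun p =>
    ⟨((p.1 : L) + (p.2 : L), (p.1 : L) - (p.2 : L)), by
      refine ⟨?_, ?_, ?_⟩
      · rw [map_add, p.1.2, p.2.2]
      · rw [map_sub, p.1.2, p.2.2]
      · rw [hd, ← map_add]
        rw [pr, QuotientAddGroup.mk'_eq_mk']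
        refine ⟨(w₀ - p.2) + (w₀ - p.2), ?_, ?_⟩
        · exact ⟨w₀ - p.2, by simp [AddMonoidHom.mem_ker, map_sub, hw, p.2.2], rfl⟩
        · dsimp only [dbl_apply]; abel⟩
  have hΦbij : Function.Bijective Φ := by
    constructor
    · rintro ⟨x, y⟩ ⟨x', y'⟩ hpq
      have hv : (((x : L) + y : L) : V) = ((x' : L) + y' : V) ∧
          (((x : L) - y : L) : V) = ((x' : L) - y' : V) := by
        have := congrArg (fun t : Tset => ((t.1.1 : V), (t.1.2 : V))) hpq
        simpa [Φ, Prod.ext_iff] using this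
      obtain ⟨h1, h2⟩ := hv
      push_cast at h1 h2
      have hx : ((x : L) : V) = ((x' : L) : V) := by
        apply half_cancel
        calc ((x : L) : V) + ((x : L) : V)
            = (((x : L) : V) + ((y : L) : V)) + (((x : L) : V) - ((y : L) : V)) := by abel
          _ = (((x' : L) : V) + ((y' : L) : V)) + (((x' : L) : V) - ((y' : L) : V)) := by
              rw [h1, h2]
          _ = ((x' : L) : V) + ((x' : L) : V) := by abel
      have hy : ((y : L) : V) = ((y' : L) : V) := by
        apply half_cancel
        calc ((y : L) : V) + ((y : L) : V)
            = (((x : L) : V) + ((y : L) : V)) - (((x : L) : V) - ((y : L) : V)) := by abel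
          _ = (((x' : L) : V) + ((y' : L) : V)) - (((x' : L) : V) - ((y' : L) : V)) := by
              rw [h1, h2]
          _ = ((y' : L) : V) + ((y' : L) : V) := by abel
      exact Prod.ext (Subtype.ext (Subtype.ext hx)) (Subtype.ext (Subtype.ext hy))
    · rintro ⟨⟨u, v⟩, hu, hv, hc⟩
      rw [hd, ← map_add, pr, QuotientAddGroup.mk'_eq_mk'] at hc
      obtain ⟨n, hn, hun⟩ := hc
      obtain ⟨k, hk, rfl⟩ := hn
      simp only [SetLike.mem_coe, AddMonoidHom.mem_ker] at hk
      simp only [dbl_apply] at hun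
      -- u + (k + k) = v + (w₀ + w₀)
      set y : L := w₀ - k with hy
      have hhy : h y = g₂ := by rw [hy, map_sub, hk, hw, sub_zero]
      set x : L := u - y with hx
      have hhx : h x = g₁ := by
        rw [hx, map_sub, hu, hhy, ha]
        abel
      refine ⟨(⟨x, hhx⟩, ⟨y, hhy⟩), ?_⟩
      apply Subtype.ext
      simp only [Φ]
      rw [Prod.mk.injEq]
      refine ⟨?_, ?_⟩
      · rw [hx]; abel
      · rw [hx, hy]
        have : v = u + (k + k) - (w₀ + w₀) := by rw [hun]; abel
        rw [this]; abel
  let e : ({x : L // h x = g₁} × {y : L // h y = g₂}) ≃ Tset := Equiv.ofBijective Φ hΦbij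
  -- step 0 : product of sums
  have step0 : chiE L h g₁ * chiE L h g₂ =
      ∑' p : {x : L // h x = g₁} × {y : L // h y = g₂},
        FE (((p.1 : L) : V)) * FE (((p.2 : L) : V)) :=
    (tsum_prod_mul _ _).symm
  have step1 : chiE L h g₁ * chiE L h g₂ =
      ∑' q : Tset, TE ((q.1.1 : L) : V) * TE ((q.1.2 : L) : V) := by
    rw [step0, ← e.tsum_eq (fun q : Tset => TE ((q.1.1 : L) : V) * TE ((q.1.2 : L) : V))]
    apply tsum_congr
    intro p
    have : FE (((p.1 : L) : V)) * FE (((p.2 : L) : V)) =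
        TE (((p.1 : L) : V) + ((p.2 : L) : V)) * TE (((p.1 : L) : V) - ((p.2 : L) : V)) :=
      FE_mul _ _
    rw [this]
    congr 1
  -- step 2 : fiber decomposition
  let m : Tset → L ⧸ J L h := fun q => pr L h q.1.1
  have step2 : (∑' q : Tset, TE ((q.1.1 : L) : V) * TE ((q.1.2 : L) : V)) =
      ∑' c : L ⧸ J L h, ∑' q : {q : Tset // m q = c},
        TE (((q : Tset).1.1 : L) : V) * TE (((q : Tset).1.2 : L) : V) := by
    rw [← (Equiv.sigmaFiberEquiv m).tsum_eq
      (fun q : Tset => TE ((q.1.1 : L) : V) * TE ((q.1.2 : L) : V))]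
    rw [ENNReal.tsum_sigma']
    rfl
  have step3 : ∀ c : L ⧸ J L h,
      (∑' q : {q : Tset // m q = c},
        TE (((q : Tset).1.1 : L) : V) * TE (((q : Tset).1.2 : L) : V)) =
      theta L h a c * theta L h b (c - d) := by
    intro c
    rw [theta, theta, ← tsum_prod_mul]
    let e2 : ({u : L // h u = a ∧ pr L h u = c} × {v : L // h v = b ∧ pr L h v = c - d}) ≃
        {q : Tset // m q = c} :=
      { toFun := fun p => ⟨⟨((p.1 : L), (p.2 : L)), p.1.2.1, p.2.2.1, by
          rw [p.1.2.2, p.2.2.2]; abel⟩, p.1.2.2⟩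
        invFun := fun q => (⟨(q : Tset).1.1, (q : Tset).2.1, q.2⟩,
          ⟨(q : Tset).1.2, (q : Tset).2.2.1, by
            have h3 := (q : Tset).2.2.2
            have h4 := q.2
            simp only [m] at h4
            rw [h4] at h3
            rw [eq_sub_iff_add_eq, ← h3]⟩)
        left_inv := fun p => rfl
        right_inv := fun q => rfl }
    exact (e2.tsum_eq (fun q : {q : Tset // m q = c} =>
      TE (((q : Tset).1.1 : L) : V) * TE (((q : Tset).1.2 : L) : V))).symm
  rw [step1, step2]
  exact tsum_congr step3

lemma key (g₁ g₂ : G) (w₀ : L) (hw : h w₀ = g₂) :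
    2 * (chiE L h g₁ * chiE L h g₂) ≤
      chiE L h 0 * chiE L h (g₁ + g₂) + chiE L h 0 * chiE L h (g₁ - g₂) := by
  set a := g₁ + g₂ with ha
  set b := g₁ - g₂ with hb
  set d := pr L h (w₀ + w₀) with hd
  have h1 := claim1 L h g₁ g₂ w₀ hw
  have h2 := claim1 L h a 0 0 (map_zero h)
  have h3 := claim1 L h b 0 0 (map_zero h)
  simp only [add_zero, sub_zero, map_zero] at h2 h3
  calc 2 * (chiE L h g₁ * chiE L h g₂)
      = ∑' c : L ⧸ J L h, 2 * (theta L h a c * theta L h b (c - d)) := by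
        rw [h1, ENNReal.tsum_mul_left]
    _ ≤ ∑' c : L ⧸ J L h,
        (theta L h a c * theta L h a c + theta L h b (c - d) * theta L h b (c - d)) :=
        ENNReal.tsum_le_tsum fun c => amgm _ _
    _ = (∑' c : L ⧸ J L h, theta L h a c * theta L h a c) +
        ∑' c : L ⧸ J L h, theta L h b (c - d) * theta L h b (c - d) := ENNReal.tsum_add
    _ = chiE L h 0 * chiE L h a + chiE L h 0 * chiE L h b := by
        have hre := (Equiv.subRight d).tsum_eq (fun c => theta L h b c * theta L h b c)
        simp only [Equiv.subRight_apply] at hre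
        rw [hre, ← h2, ← h3]
        ring

lemma chiE_eq (χ : G → ℝ)
    (hs : ∀ g : G, HasSum (fun x : {x : L // h x = g} =>
      Real.exp (-Real.pi * ⟪((x : L) : V), ((x : L) : V)⟫)) (χ g)) (g : G) :
    chiE L h g = ENNReal.ofReal (χ g) := by
  rw [chiE, ← (hs g).tsum_eq,
    ENNReal.ofReal_tsum_of_nonneg (fun _ => Real.exp_nonneg _) (hs g).summable]
  rfl

end GaussPFAux

/-- A Gaussian pushforward `χ` on a finite abelian group satisfies
`χ g₁ · χ g₂ / χ 0 ≤ (χ (g₁ + g₂) + χ (g₁ − g₂)) / 2`. -/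
theorem IsGaussianPushforward.ineq
    {G : Type} [AddCommGroup G] {χ : G → ℝ}
    (hχ : IsGaussianPushforward χ) (g₁ g₂ : G) :
    χ g₁ * χ g₂ / χ 0 ≤ (χ (g₁ + g₂) + χ (g₁ - g₂)) / 2 := by
  obtain ⟨V, iN, iI, hfd, L, h, hdisc, hs⟩ := hχ
  have hnn : ∀ g : G, 0 ≤ χ g := fun g => (hs g).nonneg fun i => Real.exp_nonneg _
  have hone : (1 : ℝ) ≤ χ 0 := by
    have := le_hasSum (hs 0) ⟨0, map_zero h⟩ (fun j _ => Real.exp_nonneg _)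
    simpa using this
  have hpos : (0 : ℝ) < χ 0 := lt_of_lt_of_le one_pos hone
  by_cases hg2 : ∃ w₀ : L, h w₀ = g₂
  · obtain ⟨w₀, hw⟩ := hg2
    have hkey := GaussPFAux.key L h g₁ g₂ w₀ hw
    have hE : ∀ g : G, GaussPFAux.chiE L h g = ENNReal.ofReal (χ g) :=
      GaussPFAux.chiE_eq L h χ hs
    rw [hE, hE, hE, hE, hE] at hkey
    have e1 : (2 : ℝ≥0∞) * (ENNReal.ofReal (χ g₁) * ENNReal.ofReal (χ g₂)) =
        ENNReal.ofReal (2 * (χ g₁ * χ g₂)) := by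
      rw [ENNReal.ofReal_mul (by norm_num), ENNReal.ofReal_mul (hnn g₁),
        ENNReal.ofReal_ofNat]
    have e2 : ENNReal.ofReal (χ 0) * ENNReal.ofReal (χ (g₁ + g₂)) +
        ENNReal.ofReal (χ 0) * ENNReal.ofReal (χ (g₁ - g₂)) =
        ENNReal.ofReal (χ 0 * χ (g₁ + g₂) + χ 0 * χ (g₁ - g₂)) := by
      rw [ENNReal.ofReal_add (mul_nonneg (hnn 0) (hnn _)) (mul_nonneg (hnn 0) (hnn _)),
        ENNReal.ofReal_mul (hnn 0), ENNReal.ofReal_mul (hnn 0)]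
    rw [e1, e2] at hkey
    have H : 2 * (χ g₁ * χ g₂) ≤ χ 0 * χ (g₁ + g₂) + χ 0 * χ (g₁ - g₂) :=
      (ENNReal.ofReal_le_ofReal_iff
        (add_nonneg (mul_nonneg (hnn 0) (hnn _)) (mul_nonneg (hnn 0) (hnn _)))).mp hkey
    rw [div_le_iff₀ hpos]
    nlinarith [H]
  · haveI hempty : IsEmpty {y : L // h y = g₂} := ⟨fun y => hg2 ⟨y.1, y.2⟩⟩
    have h0 : χ g₂ = 0 := ((hs g₂).unique hasSum_empty)
    rw [h0, mul_zero, zero_div]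
    have := hnn (g₁ + g₂)
    have := hnn (g₁ - g₂)
    linarith
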